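/- Let C_0 be an [n,t] linear code over F_q with generator matrix G_0 ∈ F_q^{t×n}, let Q = q^t, let α_1,...,α_t be a basis of F_Q over F_q, and define β_1,...,β_n ∈ F_Q by [β_1 ... β_n] = [α_1 ... α_t] G_0. Let C be the [n,k] code over F_Q generated by the k×n Moore-type matrix G with G(i,j) = β_j^{q^{i-1}}, 1 ≤ i ≤ k. Then C is a maximally recoverable subcode of the [n,t] code over F_Q generated by G_0. -/

import Mathlib

open Matrix

section Defs
variable {F : Type*} [Field F]

/-- Rank of the submatrix of `G` consisting of the columns indexed by `S`. -/
noncomputable def colRank {m α : Type*} [Fintype α] (G : Matrix m α F) (S : Finset α) : ℕ :=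
  (G.submatrix id (fun j : S => (j : α))).rank

/-- The row space of a matrix. -/
def rowSpan {m α : Type*} (G : Matrix m α F) : Submodule F (α → F) :=
  Submodule.span F (Set.range fun i => G i)

/-- Rank of the restriction (puncturing) of a code `C` to the coordinates in `S`. -/
noncomputable def restrRank {α : Type*} (C : Submodule F (α → F)) (S : Finset α) : ℕ :=
  Module.finrank F (C.map (LinearMap.funLeft F F (fun j : S => (j : α))))

/-- Shortening of a code on coordinates `α ⊕ β` to the coordinates `α`. -/
noncomputable def shortenSum {α β : Type*} (D : Submodule F ((α ⊕ β) → F)) :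
    Submodule F (α → F) :=
  Submodule.map (LinearMap.funLeft F F Sum.inl)
    (D ⊓ (⨅ j : β, LinearMap.ker
      (LinearMap.proj (R := F) (Sum.inr j) : ((α ⊕ β) → F) →ₗ[F] F)))

/-- A valid (zero-error, worst case) scheme for the point-to-point function-update problem. -/
def IsValidScheme [DecidableEq F] {n m ℓ : ℕ} (A : Matrix (Fin m) (Fin n) F)
    (H : Matrix (Fin ℓ) (Fin n) F) (ε : ℕ)
    (D : (Fin ℓ → F) → (Fin m → F) → (Fin m → F)) : Prop :=
  ∀ X E : Fin n → F, hammingNorm E ≤ ε →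
    D (H.mulVec (X + E)) (A.mulVec X) = A.mulVec (X + E)

end Defs

section Aux

open Polynomial

/-- Rank of a matrix equals the number of columns iff the columns are linearly independent. -/
lemma rank_eq_card_iff_cols {K m ι : Type*} [Field K] [Fintype m] [Fintype ι]
    (A : Matrix m ι K) :
    A.rank = Fintype.card ι ↔ LinearIndependent K (fun j : ι => Aᵀ j) := by
  rw [Matrix.rank_eq_finrank_span_cols, linearIndependent_iff_card_eq_finrank_span, eq_comm]
  rfl

/-- Moore matrix of linearly independent elements is invertible. -/
lemma moore_isUnit {F L : Type*} [Field F] [Fintype F] [Field L] [Algebra F L] {k : ℕ}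
    (γ : Fin k → L) (hind : LinearIndependent F γ) :
    IsUnit (Matrix.of fun (i j : Fin k) => γ j ^ (Fintype.card F) ^ (i : ℕ)) := by
  classical
  set q := Fintype.card F with hq
  rw [Matrix.isUnit_iff_isUnit_det, isUnit_iff_ne_zero]
  intro hdet
  have hdetT : (Matrix.of fun (i j : Fin k) => γ j ^ q ^ (i : ℕ))ᵀ.det = 0 := by
    rw [Matrix.det_transpose]; exact hdet
  obtain ⟨c, hc0, hc⟩ := (Matrix.exists_mulVec_eq_zero_iff).2 hdetT
  have hcj : ∀ j : Fin k, ∑ i : Fin k, c i * γ j ^ q ^ (i : ℕ) = 0 := by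
    intro j
    have := congrFun hc j
    simpa [Matrix.mulVec, dotProduct, mul_comm] using this
  have hq1 : 1 < q := Fintype.one_lt_card
  have hq0 : 0 < q := lt_trans one_pos hq1
  set P : L[X] := ∑ i : Fin k, C (c i) * X ^ (q ^ (i : ℕ)) with hP
  have heval : ∀ x : L, P.eval x = ∑ i : Fin k, c i * x ^ q ^ (i : ℕ) := by
    intro x; simp [hP, eval_finset_sum]
  have hPne : P ≠ 0 := by
    obtain ⟨i0, hi0⟩ := Function.ne_iff.1 hc0
    intro h
    apply hi0
    have hcoeff := congrArg (fun p : L[X] => p.coeff (q ^ (i0 : ℕ))) h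
    have hinj : ∀ i : Fin k, q ^ (i : ℕ) = q ^ (i0 : ℕ) → i = i0 := by
      intro i hi
      exact Fin.val_injective (Nat.pow_right_injective hq1 hi)
    simp only [hP, finset_sum_coeff, coeff_C_mul, coeff_X_pow, coeff_zero, mul_ite, mul_one,
      mul_zero] at hcoeff
    rw [Finset.sum_eq_single i0] at hcoeff
    · simpa using hcoeff
    · intro i _ hii0
      rw [if_neg (fun h' => hii0 (hinj i h'.symm))]
    · intro h'; exact absurd (Finset.mem_univ i0) h'
  have hdeg : P.natDegree < q ^ k := by
    have h1 : P.natDegree ≤ q ^ k - 1 := by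
      apply natDegree_sum_le_of_forall_le
      intro i _
      refine le_trans (natDegree_C_mul_le _ _) ?_
      rw [natDegree_X_pow]
      exact Nat.le_sub_one_of_lt (Nat.pow_lt_pow_right hq1 i.isLt)
    exact lt_of_le_of_lt h1 (Nat.sub_lt (Nat.pow_pos (n := k) hq0) one_pos)
  set p := ringChar F with hpdef
  haveI : CharP F p := ringChar.charP F
  have hp : p.Prime := CharP.char_is_prime F p
  haveI := Fact.mk hp
  haveI : CharP L p := charP_of_injective_algebraMap (R := F) (A := L) (algebraMap F L).injective p
  obtain ⟨m, _, hqm⟩ := FiniteField.card F p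
  have hfrob : ∀ (x y : L) (i : ℕ), (x + y) ^ q ^ i = x ^ q ^ i + y ^ q ^ i := by
    intro x y i
    have hqm' : q = p ^ (m : ℕ) := hqm
    rw [hqm', ← pow_mul]
    exact add_pow_char_pow x y p (↑m * i)
  have hroot : ∀ x ∈ Submodule.span F (Set.range γ),
      ∑ i : Fin k, c i * x ^ q ^ (i : ℕ) = 0 := by
    intro x hx
    induction hx using Submodule.span_induction with
    | mem x hxmem =>
      obtain ⟨j, rfl⟩ := hxmem
      exact hcj j
    | zero =>
      simp [zero_pow (Nat.pow_pos (n := _) hq0).ne']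
    | add x y hx hy ihx ihy =>
      simp only [hfrob, mul_add, Finset.sum_add_distrib, ihx, ihy, add_zero]
    | smul a x hx ih =>
      rw [Algebra.smul_def]
      have hpow : ∀ i : ℕ, (algebraMap F L a * x) ^ q ^ i
          = algebraMap F L a * x ^ q ^ i := by
        intro i
        rw [mul_pow, ← map_pow, FiniteField.pow_card_pow]
      simp only [hpow]
      calc ∑ i : Fin k, c i * (algebraMap F L a * x ^ q ^ (i : ℕ))
          = algebraMap F L a * ∑ i : Fin k, c i * x ^ q ^ (i : ℕ) := by
            rw [Finset.mul_sum]; congr 1; funext i; ring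
        _ = 0 := by rw [ih, mul_zero]
  set f : (Fin k → F) → L := fun d => ∑ i, d i • γ i with hf
  have hf_inj : Function.Injective f := by
    intro d d' hdd
    have hz : ∑ i, (d i - d' i) • γ i = 0 := by
      simp only [sub_smul, Finset.sum_sub_distrib]
      rw [show (∑ i, d i • γ i) = f d from rfl, show (∑ i, d' i • γ i) = f d' from rfl, hdd,
        sub_self]
    have h3 := Fintype.linearIndependent_iff.1 hind _ hz
    funext i
    have hi := h3 i
    rwa [sub_eq_zero] at hi
  have hf_mem : ∀ d, f d ∈ Submodule.span F (Set.range γ) :=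
    fun d => Submodule.sum_mem _ fun i _ =>
      Submodule.smul_mem _ _ (Submodule.subset_span (Set.mem_range_self i))
  set T : Finset L := Finset.image f Finset.univ with hT
  have hTcard : T.card = q ^ k := by
    rw [hT, Finset.card_image_of_injective _ hf_inj, Finset.card_univ, Fintype.card_fun]
    simp [hq]
  have hsub : T ⊆ P.roots.toFinset := by
    intro x hx
    rw [Multiset.mem_toFinset, mem_roots hPne]
    obtain ⟨d, _, rfl⟩ := Finset.mem_image.1 hx
    rw [IsRoot, heval]
    exact hroot _ (hf_mem d)
  have hfin : q ^ k ≤ P.natDegree := by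
    calc q ^ k = T.card := hTcard.symm
      _ ≤ P.roots.toFinset.card := Finset.card_le_card hsub
      _ ≤ Multiset.card P.roots := Multiset.toFinset_card_le _
      _ ≤ P.natDegree := card_roots' P
  exact absurd hfin (not_le.2 hdeg)

end Aux

/-- the Moore-type code built from `β = α·G0` is an MRSC of the code
generated by `G0` over the extension field `F_Q`, `Q = q^t`. -/
theorem moore_code_is_mrsc {F L : Type*} [Field F] [Fintype F] [Field L] [Algebra F L]
    {q n t k : ℕ} (hq : Fintype.card F = q) (ht : Module.finrank F L = t) (hk : k ≤ t)
    (G0 : Matrix (Fin t) (Fin n) F) (b : Module.Basis (Fin t) F L)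
    (β : Fin n → L) (hβ : ∀ j, β j = ∑ i, b i * algebraMap F L (G0 i j)) :
    ∀ S : Finset (Fin n), S.card = k →
      colRank (G0.map (algebraMap F L)) S = k →
      colRank (Matrix.of fun (i : Fin k) (j : Fin n) => β j ^ q ^ (i : ℕ)) S = k := by
  classical
  subst hq
  intro S hScard hr0
  have hcardS : Fintype.card S = k := by rw [Fintype.card_coe, hScard]
  have hLind : LinearIndependent L
      (fun j : S => ((G0.map (algebraMap F L)).submatrix id (fun j : S => (j : Fin n)))ᵀ j) := by
    rw [← rank_eq_card_iff_cols, hcardS]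
    exact hr0
  have hgind : LinearIndependent F (fun j : S => (fun i => G0 i (j : Fin n))) := by
    rw [Fintype.linearIndependent_iff]
    intro c hcsum j
    have hzero : ∑ j : S, (algebraMap F L (c j)) •
        ((G0.map (algebraMap F L)).submatrix id (fun j : S => (j : Fin n)))ᵀ j = 0 := by
      funext i
      have hci := congrFun hcsum i
      simp only [Finset.sum_apply, Pi.smul_apply, Pi.zero_apply] at hci ⊢
      simp only [Matrix.transpose_apply, Matrix.submatrix_apply, Matrix.map_apply, id,
        smul_eq_mul, ← _root_.map_mul, ← map_sum]
      rw [show (∑ x : S, c x * G0 i (x : Fin n)) = 0 from by simpa using hci, map_zero]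
    have h4 := Fintype.linearIndependent_iff.1 hLind _ hzero j
    exact (algebraMap F L).injective (by simpa using h4)
  have hβS : LinearIndependent F (fun j : S => β (j : Fin n)) := by
    have h2 := hgind.map' b.equivFun.symm.toLinearMap b.equivFun.symm.ker
    have heq : (fun j : S => β (j : Fin n))
        = (b.equivFun.symm.toLinearMap ∘ fun j : S => (fun i => G0 i (j : Fin n))) := by
      funext j
      rw [hβ]
      simp [Module.Basis.equivFun_symm_apply, Algebra.smul_def, mul_comm]
    rw [heq]
    exact h2
  set e : Fin k ≃ S := (Finset.equivFinOfCardEq hScard).symm with he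
  have hγ : LinearIndependent F (fun i : Fin k => β ((e i : S) : Fin n)) :=
    hβS.comp e e.injective
  have hunit := moore_isUnit _ hγ
  show ((Matrix.of fun (i : Fin k) (j : Fin n) => β j ^ (Fintype.card F) ^ (i : ℕ)).submatrix
      id (fun j : S => (j : Fin n))).rank = k
  have hrows : LinearIndependent L
      (fun j' : Fin k =>
        (Matrix.of fun (i j : Fin k) => β ((e j : S) : Fin n) ^ (Fintype.card F) ^ (i : ℕ))ᵀ j') :=
    Matrix.linearIndependent_rows_iff_isUnit.2 ((Matrix.isUnit_transpose _).2 hunit)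
  have hLI : LinearIndependent L (fun j : S =>
      ((Matrix.of fun (i : Fin k) (j : Fin n) => β j ^ (Fintype.card F) ^ (i : ℕ)).submatrix
        id (fun j : S => (j : Fin n)))ᵀ j) := by
    refine (linearIndependent_equiv' e ?_).1 hrows
    funext j' i
    rfl
  exact ((rank_eq_card_iff_cols _).2 hLI).trans hcardS
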